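/- Under the independent-outcome model, suppose |Δ_j − Δ̂_j| ≤ ε_j for all items, where Δ_j = uᵀx_j and Δ̂_j = wᵀx_j, and the algorithm plays the sequence J = ⟨x_{j_1},...,x_{j_s}⟩ maximizing the upper-confidence expected reward built from σ(Δ̂_j + ε_j). If σ' ≤ z everywhere, then the one-step regret satisfies E_Y[R(J*,Y)] − E_Y[R(J,Y)] ≤ 4z Σ_{i=1}^s ε_{j_i} ∏_{h=1}^{i-1}(1 − σ(Δ_{j_h})) when J ≠ ⟨⟩, and ≤ 0 when J = ⟨⟩. -/

import Mathlib

open Finset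
open scoped Classical

/-- The logistic sigmoid. -/
noncomputable def sig (t : ℝ) : ℝ := Real.exp t / (1 + Real.exp t)

/-- Expected reward of a retry sequence under the independent-outcome cascading model. -/
noncomputable def seqReward {ι : Type*} (p : ι → ℝ) : (ℕ → ℝ) → (ℕ → ℝ) → List ι → ℝ
  | _, l, [] => l 0
  | r, l, x :: L => r 1 * p x + (1 - p x) * seqReward p (fun i => r (i + 1)) (fun i => l (i + 1)) L

lemma sig_pos (t : ℝ) : 0 < sig t := div_pos (Real.exp_pos t) (by positivity)

lemma sig_lt_one (t : ℝ) : sig t < 1 := by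
  rw [sig, div_lt_one (by positivity)]; linarith [Real.exp_pos t]

lemma sig_mono : Monotone sig := by
  intro a b hab
  rw [sig, sig, div_le_div_iff₀ (by positivity) (by positivity)]
  have h := Real.exp_le_exp.mpr hab
  nlinarith [Real.exp_pos a, Real.exp_pos b]

lemma hasDerivAt_sig (t : ℝ) :
    HasDerivAt sig (Real.exp t / (1 + Real.exp t) ^ 2) t := by
  have h1 : HasDerivAt (fun s : ℝ => Real.exp s) (Real.exp t) t := Real.hasDerivAt_exp t
  have h2 : HasDerivAt (fun s : ℝ => 1 + Real.exp s) (Real.exp t) t := h1.const_add 1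
  have hne : (1 + Real.exp t) ≠ 0 := by positivity
  have h : HasDerivAt (fun s => Real.exp s / (1 + Real.exp s))
      ((Real.exp t * (1 + Real.exp t) - Real.exp t * Real.exp t) / (1 + Real.exp t) ^ 2) t :=
    h1.div h2 hne
  convert h using 1
  · rfl
  have := Real.exp_pos t
  ring

lemma sig_sub_le {z : ℝ} (hz : ∀ t, deriv sig t ≤ z) {a b : ℝ} (h : b ≤ a) :
    sig a - sig b ≤ z * (a - b) := by
  have hderiv : ∀ x : ℝ, deriv sig x = Real.exp x / (1 + Real.exp x) ^ 2 :=
    fun x => (hasDerivAt_sig x).deriv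
  have hd : ∀ x ∈ (Set.univ : Set ℝ), DifferentiableAt ℝ sig x :=
    fun x _ => (hasDerivAt_sig x).differentiableAt
  have hb : ∀ x ∈ (Set.univ : Set ℝ), ‖deriv sig x‖ ≤ z := by
    intro x _
    rw [Real.norm_eq_abs, abs_of_nonneg (by rw [hderiv x]; positivity)]
    exact hz x
  have key := (convex_univ : Convex ℝ (Set.univ : Set ℝ)).norm_image_sub_le_of_norm_deriv_le
    hd hb (Set.mem_univ b) (Set.mem_univ a)
  rw [Real.norm_eq_abs, Real.norm_eq_abs] at key
  calc sig a - sig b ≤ |sig a - sig b| := le_abs_self _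
    _ ≤ z * |a - b| := key
    _ = z * (a - b) := by rw [abs_of_nonneg (by linarith)]

lemma sig_deriv_nonneg {z : ℝ} (hz : ∀ t, deriv sig t ≤ z) : 0 ≤ z := by
  refine le_trans ?_ (hz 0)
  rw [(hasDerivAt_sig 0).deriv]; positivity

lemma seqReward_le_bound {ι : Type*} (p : ι → ℝ) (M : ℝ)
    (hp0 : ∀ x, 0 ≤ p x) (hp1 : ∀ x, p x ≤ 1) (hM : 0 ≤ M) :
    ∀ (L : List ι) (r l : ℕ → ℝ), (∀ i, 1 ≤ i → r i ≤ M) → (∀ s, l s ≤ M) →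
      seqReward p r l L ≤ M
  | [], r, l, hr, hl => by simpa [seqReward] using hl 0
  | x :: L, r, l, hr, hl => by
    have IH := seqReward_le_bound p M hp0 hp1 hM L (fun i => r (i + 1)) (fun i => l (i + 1))
      (fun i hi => hr (i + 1) (by omega)) (fun s => hl (s + 1))
    have h1 := hr 1 le_rfl
    have h2 := hp0 x
    have h3 := hp1 x
    simp only [seqReward]
    nlinarith

lemma abs_seqReward_le {ι : Type*} (p : ι → ℝ)
    (hp0 : ∀ x, 0 ≤ p x) (hp1 : ∀ x, p x ≤ 1) :
    ∀ (L : List ι) (r l : ℕ → ℝ), (∀ i, 1 ≤ i → |r i| ≤ 1) → (∀ s, |l s| ≤ 1) →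
      |seqReward p r l L| ≤ 1
  | [], r, l, hr, hl => by simpa [seqReward] using hl 0
  | x :: L, r, l, hr, hl => by
    have IH := abs_seqReward_le p hp0 hp1 L (fun i => r (i + 1)) (fun i => l (i + 1))
      (fun i hi => hr (i + 1) (by omega)) (fun s => hl (s + 1))
    have h1 := hr 1 le_rfl
    have h2 := hp0 x
    have h3 := hp1 x
    rw [abs_le] at IH h1 ⊢
    simp only [seqReward]
    constructor <;> nlinarith [IH.1, IH.2, h1.1, h1.2]

lemma seqReward_mono {ι : Type*} (p q : ι → ℝ)
    (hp0 : ∀ x, 0 ≤ p x) (hp1 : ∀ x, p x ≤ 1)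
    (hq0 : ∀ x, 0 ≤ q x) (hq1 : ∀ x, q x ≤ 1)
    (hpq : ∀ x, p x ≤ q x) :
    ∀ (L : List ι) (r l : ℕ → ℝ), (∀ i, 1 ≤ i → 0 < r i) →
      (∀ i, 1 ≤ i → r (i + 1) ≤ r i) → (∀ s, l s ≤ 0) →
      seqReward p r l L ≤ seqReward q r l L
  | [], r, l, hrp, hrm, hl => le_rfl
  | x :: L, r, l, hrp, hrm, hl => by
    have IH := seqReward_mono p q hp0 hp1 hq0 hq1 hpq L
      (fun i => r (i + 1)) (fun i => l (i + 1))
      (fun i hi => hrp (i + 1) (by omega)) (fun i hi => hrm (i + 1) (by omega))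
      (fun s => hl (s + 1))
    have hr1 : ∀ i, 1 ≤ i → r i ≤ r 1 := by
      intro i hi
      induction i with
      | zero => omega
      | succ n ih =>
        rcases Nat.lt_or_ge n 1 with h | h
        · interval_cases n; exact le_rfl
        · exact le_trans (hrm n h) (ih h)
    have hVq : seqReward q (fun i => r (i + 1)) (fun i => l (i + 1)) L ≤ r 1 := by
      refine seqReward_le_bound q (r 1) hq0 hq1 (le_of_lt (hrp 1 le_rfl)) L _ _
        (fun i hi => hr1 (i + 1) (by omega)) (fun s => le_trans (hl (s + 1)) ?_)
      exact le_of_lt (hrp 1 le_rfl)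
    have h2 := hpq x
    have h3 := hp1 x
    simp only [seqReward]
    nlinarith [mul_nonneg (sub_nonneg.2 h2)
        (sub_nonneg.2 hVq),
      mul_nonneg (sub_nonneg.2 h3) (sub_nonneg.2 IH)]

lemma seqReward_diff_le {ι : Type*} [Inhabited ι] (p q d : ι → ℝ)
    (hp0 : ∀ x, 0 ≤ p x) (hp1 : ∀ x, p x ≤ 1)
    (hq0 : ∀ x, 0 ≤ q x) (hq1 : ∀ x, q x ≤ 1)
    (hpq : ∀ x, p x ≤ q x) (hd : ∀ x, q x - p x ≤ d x) :
    ∀ (L : List ι) (r l : ℕ → ℝ), (∀ i, 1 ≤ i → |r i| ≤ 1) → (∀ s, |l s| ≤ 1) →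
      seqReward q r l L - seqReward p r l L ≤
        ∑ i ∈ Finset.range L.length, 2 * d (L.getD i default) *
          ∏ h ∈ Finset.range i, (1 - p (L.getD h default))
  | [], r, l, hr, hl => by simp [seqReward]
  | x :: L, r, l, hr, hl => by
    have hr' : ∀ i, 1 ≤ i → |r (i + 1)| ≤ 1 := fun i hi => hr (i + 1) (by omega)
    have hl' : ∀ s, |l (s + 1)| ≤ 1 := fun s => hl (s + 1)
    have IH := seqReward_diff_le p q d hp0 hp1 hq0 hq1 hpq hd L
      (fun i => r (i + 1)) (fun i => l (i + 1)) hr' hl'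
    set Vq := seqReward q (fun i => r (i + 1)) (fun i => l (i + 1)) L with hVqdef
    set Vp := seqReward p (fun i => r (i + 1)) (fun i => l (i + 1)) L with hVpdef
    set S := ∑ i ∈ Finset.range L.length, 2 * d (L.getD i default) *
      ∏ h ∈ Finset.range i, (1 - p (L.getD h default)) with hSdef
    have hVq : |Vq| ≤ 1 := abs_seqReward_le q hq0 hq1 L _ _ hr' hl'
    have hr1 : |r 1| ≤ 1 := hr 1 le_rfl
    rw [abs_le] at hVq hr1
    have hRHS : ∑ i ∈ Finset.range (x :: L).length, 2 * d ((x :: L).getD i default) *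
          ∏ h ∈ Finset.range i, (1 - p ((x :: L).getD h default))
        = 2 * d x + (1 - p x) * S := by
      rw [List.length_cons, Finset.sum_range_succ']
      simp only [List.getD_cons_succ, List.getD_cons_zero, Finset.prod_range_succ',
        List.getD_cons_zero, Finset.prod_range_zero, mul_one, hSdef, Finset.mul_sum]
      rw [add_comm]
      congr 1
      exact Finset.sum_congr rfl (fun i _ => by simp [List.getD_cons_succ]; ring)
    rw [hRHS]
    have key : seqReward q r l (x :: L) - seqReward p r l (x :: L)
        = (q x - p x) * (r 1 - Vq) + (1 - p x) * (Vq - Vp) := by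
      simp only [seqReward, ← hVqdef, ← hVpdef]
      ring
    rw [key]
    have h1 : (q x - p x) * (r 1 - Vq) ≤ 2 * d x := by
      nlinarith [hpq x, hd x, hVq.1, hVq.2, hr1.1, hr1.2]
    have h2 : (1 - p x) * (Vq - Vp) ≤ (1 - p x) * S :=
      mul_le_mul_of_nonneg_left IH (by linarith [hp1 x])
    linarith

theorem one_step_regret_bound
    {ι : Type*} [Inhabited ι]
    (Δ Δhat ε : ι → ℝ) (r ℓ : ℕ → ℝ) (z : ℝ) (b : ℕ)
    (hε : ∀ j, 0 ≤ ε j)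
    (happrox : ∀ j, |Δ j - Δhat j| ≤ ε j)
    (hr_pos : ∀ i, 1 ≤ i → 0 < r i)
    (hr_le_one : ∀ i, 1 ≤ i → r i ≤ 1)
    (hr_mono : ∀ i, 1 ≤ i → r (i + 1) ≤ r i)
    (hℓ_ge : ∀ s, -1 ≤ ℓ s)
    (hℓ_neg : ∀ s, ℓ s < 0)
    (hz : ∀ t : ℝ, deriv sig t ≤ z)
    (Jstar J : List ι)
    (hJstar_nodup : Jstar.Nodup) (hJstar_len : Jstar.length ≤ b)
    (hJ_nodup : J.Nodup) (hJ_len : J.length ≤ b)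
    (hBayes : ∀ L : List ι, L.Nodup → L.length ≤ b →
      seqReward (fun x => sig (Δ x)) r ℓ L ≤ seqReward (fun x => sig (Δ x)) r ℓ Jstar)
    (hUCB : ∀ L : List ι, L.Nodup → L.length ≤ b →
      seqReward (fun x => sig (Δhat x + ε x)) r ℓ L
        ≤ seqReward (fun x => sig (Δhat x + ε x)) r ℓ J) :
    seqReward (fun x => sig (Δ x)) r ℓ Jstar - seqReward (fun x => sig (Δ x)) r ℓ J ≤
      if J = [] then 0
      else 4 * z * ∑ i ∈ Finset.range J.length,
        ε (J.getD i default) *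
          ∏ h ∈ Finset.range i, (1 - sig (Δ (J.getD h default))) := by
  set p : ι → ℝ := fun x => sig (Δ x) with hp
  set q : ι → ℝ := fun x => sig (Δhat x + ε x) with hq
  have hz0 : 0 ≤ z := sig_deriv_nonneg hz
  have hp0 : ∀ x, 0 ≤ p x := fun x => le_of_lt (sig_pos _)
  have hp1 : ∀ x, p x ≤ 1 := fun x => le_of_lt (sig_lt_one _)
  have hq0 : ∀ x, 0 ≤ q x := fun x => le_of_lt (sig_pos _)
  have hq1 : ∀ x, q x ≤ 1 := fun x => le_of_lt (sig_lt_one _)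
  have hle : ∀ x, Δ x ≤ Δhat x + ε x := by
    intro x
    have := (abs_le.mp (happrox x)).2
    linarith
  have hpq : ∀ x, p x ≤ q x := fun x => sig_mono (hle x)
  have hd : ∀ x, q x - p x ≤ 2 * z * ε x := by
    intro x
    have h1 : sig (Δhat x + ε x) - sig (Δ x) ≤ z * (Δhat x + ε x - Δ x) :=
      sig_sub_le hz (hle x)
    have h2 : Δhat x + ε x - Δ x ≤ 2 * ε x := by
      have := (abs_le.mp (happrox x)).1
      linarith
    have h3 : z * (Δhat x + ε x - Δ x) ≤ z * (2 * ε x) :=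
      mul_le_mul_of_nonneg_left h2 hz0
    calc q x - p x ≤ z * (Δhat x + ε x - Δ x) := h1
      _ ≤ z * (2 * ε x) := h3
      _ = 2 * z * ε x := by ring
  have hrabs : ∀ i, 1 ≤ i → |r i| ≤ 1 := fun i hi =>
    abs_le.mpr ⟨by linarith [hr_pos i hi], hr_le_one i hi⟩
  have hlabs : ∀ s, |ℓ s| ≤ 1 := fun s =>
    abs_le.mpr ⟨hℓ_ge s, by linarith [hℓ_neg s]⟩
  have hmono : seqReward p r ℓ Jstar ≤ seqReward q r ℓ Jstar :=
    seqReward_mono p q hp0 hp1 hq0 hq1 hpq Jstar r ℓ hr_pos hr_mono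
      (fun s => le_of_lt (hℓ_neg s))
  have hucb := hUCB Jstar hJstar_nodup hJstar_len
  by_cases hJ : J = []
  · subst hJ
    rw [if_pos rfl]
    have : seqReward q r ℓ ([] : List ι) = seqReward p r ℓ ([] : List ι) := rfl
    linarith
  · rw [if_neg hJ]
    have hdiff := seqReward_diff_le p q (fun x => 2 * z * ε x)
      hp0 hp1 hq0 hq1 hpq hd J r ℓ hrabs hlabs
    have hsum : ∑ i ∈ Finset.range J.length, 2 * (2 * z * ε (J.getD i default)) *
          ∏ h ∈ Finset.range i, (1 - p (J.getD h default))
        = 4 * z * ∑ i ∈ Finset.range J.length, ε (J.getD i default) *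
          ∏ h ∈ Finset.range i, (1 - p (J.getD h default)) := by
      rw [Finset.mul_sum]
      exact Finset.sum_congr rfl (fun i _ => by ring)
    rw [hsum] at hdiff
    linarith
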